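/- Let n ≥ 3, 2 ≤ k ≤ n, and let ξ solve ξ' = −{1 + e^{−2ξ}[1 + (−1)ᵏ c e^{nξ}]^{1/k}}^{1/2} on (T̲, T̄) with (−1)ᵏ c < 0 and ξ(t) → ξ₀ := −(1/n)ln|c| and ξ'(t) → −1 as t → T̲⁺. Then (t − T̲)^{(k−1)/k} ξ''(t) converges to a finite negative limit as t → T̲⁺; consequently ξ extends to a C^{1,1/k} function on [T̲, T̄) but does not extend to a C^{1,γ} function near T̲ for any γ > 1/k. -/

import Mathlib

open Real Filter Set

lemma aux_subadd {x y p : ℝ} (hx : 0 ≤ x) (hy : 0 ≤ y) (hp0 : 0 ≤ p) (hp1 : p ≤ 1) :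
    (x + y) ^ p ≤ x ^ p + y ^ p := by
  have h := NNReal.rpow_add_le_add_rpow x.toNNReal y.toNNReal hp0 hp1
  have h' := NNReal.coe_le_coe.2 h
  push_cast at h'
  rwa [Real.coe_toNNReal x hx, Real.coe_toNNReal y hy] at h'

lemma aux_le {s t : ℝ} (hst : s ≤ t) {f f' : ℝ → ℝ}
    (hf : ∀ x ∈ Set.Icc s t, HasDerivAt f (f' x) x)
    (h0 : ∀ x ∈ Set.Ioo s t, 0 ≤ f' x) : f s ≤ f t := by
  have := monotoneOn_of_hasDerivWithinAt_nonneg (convex_Icc s t)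
      (fun x hx => (hf x hx).continuousAt.continuousWithinAt)
      (fun x hx => (hf x (interior_subset hx)).hasDerivWithinAt)
      (fun x hx => h0 x (by rwa [interior_Icc] at hx))
  exact this (left_mem_Icc.2 hst) (right_mem_Icc.2 hst) hst

set_option maxHeartbeats 2000000

/-- for a solution of `ξ' = −{1 + e^{−2ξ}[1 + (−1)ᵏ c e^{nξ}]^{1/k}}^{1/2}` on
`(T̲, T̄)` with `(−1)ᵏ c < 0`, `ξ(t) → ξ₀ = −(1/n)ln|c|` and `ξ'(t) → −1` as `t → T̲⁺`,
the quantity `(t − T̲)^{(k−1)/k} ξ''(t)` converges to a finite negative limit as `t → T̲⁺`;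
consequently `ξ'` extends continuously to `[T̲, T̄)`, the extension is `1/k`-Hölder near `T̲`
(so `ξ` extends to a `C^{1,1/k}` function on `[T̲, T̄)`), but for every `γ > 1/k` no such
extension is `γ`-Hölder near `T̲` (`ξ` is not `C^{1,γ}` near `T̲`). -/
theorem stmt19 (n k : ℕ) (hn : 3 ≤ n) (hk2 : 2 ≤ k) (hkn : k ≤ n)
    (c : ℝ) (hsign : (-1 : ℝ) ^ k * c < 0)
    (Tlow Thigh : ℝ) (hT : Tlow < Thigh)
    (ξ ξ' ξ'' : ℝ → ℝ)
    (hderiv1 : ∀ t ∈ Set.Ioo Tlow Thigh, HasDerivAt ξ (ξ' t) t)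
    (hderiv2 : ∀ t ∈ Set.Ioo Tlow Thigh, HasDerivAt ξ' (ξ'' t) t)
    (hODE : ∀ t ∈ Set.Ioo Tlow Thigh, ξ' t =
      -Real.sqrt (1 + Real.exp (-2 * ξ t) *
        (1 + (-1 : ℝ) ^ k * c * Real.exp ((n : ℝ) * ξ t)) ^ ((1 : ℝ) / k)))
    (hlim : Tendsto ξ (nhdsWithin Tlow (Set.Ioi Tlow))
      (nhds (-(1 / (n : ℝ)) * Real.log |c|)))
    (hlim' : Tendsto ξ' (nhdsWithin Tlow (Set.Ioi Tlow)) (nhds (-1))) :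
    (∃ L : ℝ, L < 0 ∧
      Tendsto (fun t => (t - Tlow) ^ (((k : ℝ) - 1) / k) * ξ'' t)
        (nhdsWithin Tlow (Set.Ioi Tlow)) (nhds L))
    ∧ ∃ d : ℝ → ℝ, ContinuousOn d (Set.Ico Tlow Thigh)
        ∧ Set.EqOn d ξ' (Set.Ioo Tlow Thigh)
        -- `d` (hence `ξ'`) is `1/k`-Hölder on initial compact subintervals: `C^{1,1/k}`
        ∧ (∀ b ∈ Set.Ioo Tlow Thigh, ∃ C : ℝ,
            ∀ s ∈ Set.Icc Tlow b, ∀ t ∈ Set.Icc Tlow b,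
              |d s - d t| ≤ C * |s - t| ^ ((1 : ℝ) / k))
        -- but for any `γ > 1/k` it is not `γ`-Hölder near `T̲`: not `C^{1,γ}`
        ∧ (∀ γ : ℝ, (1 : ℝ) / k < γ → ∀ b ∈ Set.Ioo Tlow Thigh, ∀ C : ℝ,
            ∃ s ∈ Set.Icc Tlow b, ∃ t ∈ Set.Icc Tlow b,
              C * |s - t| ^ γ < |d s - d t|) := by
  have hkR : (0:ℝ) < k := by exact_mod_cast (by omega : 0 < k)
  have hk1R : (1:ℝ) ≤ k := by exact_mod_cast (by omega : 1 ≤ k)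
  have hnR : (0:ℝ) < n := by exact_mod_cast (by omega : 0 < n)
  set ξ0 : ℝ := -(1 / (n : ℝ)) * Real.log |c| with hξ0def
  set c' : ℝ := (-1 : ℝ) ^ k * c with hc'def
  set p : ℝ := (1 : ℝ) / k with hpdef
  set α : ℝ := ((k : ℝ) - 1) / k with hαdef
  have hp : 0 < p := by rw [hpdef]; positivity
  have hp1 : p ≤ 1 := by rw [hpdef, div_le_one hkR]; linarith
  have hαp : α + p = 1 := by rw [hαdef, hpdef]; field_simp; ring
  have hα0 : 0 ≤ α := by linarith
  have hc' : c' < 0 := hsign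
  have hcne : c ≠ 0 := by
    intro h; rw [hc'def, h, mul_zero] at hc'; exact lt_irrefl 0 hc'
  have habs : |c| = -c' := by
    have h1 : |c'| = |c| := by
      rw [hc'def, abs_mul, abs_pow, abs_neg, abs_one, one_pow, one_mul]
    rw [← h1, abs_of_neg hc']
  have hexp0 : c' * Real.exp ((n:ℝ) * ξ0) = -1 := by
    have h1 : (n:ℝ) * ξ0 = -Real.log |c| := by
      rw [hξ0def]; field_simp
    rw [h1, Real.exp_neg, Real.exp_log (abs_pos.2 hcne), habs]
    rw [show (-c')⁻¹ = -c'⁻¹ by rw [neg_inv], mul_neg, mul_inv_cancel₀ (ne_of_lt hc')]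
  set g : ℝ → ℝ := fun x => 1 + c' * Real.exp ((n:ℝ) * x) with hgdef
  set h : ℝ → ℝ := fun x => 1 + Real.exp (-2 * x) * g x ^ p with hhdef
  have hODE' : ∀ t ∈ Set.Ioo Tlow Thigh, ξ' t = -Real.sqrt (h (ξ t)) := by
    intro t ht; rw [hODE t ht]
  have hg0 : g ξ0 = 0 := by rw [hgdef]; simp only; rw [hexp0]; ring
  have hξ'np : ∀ t ∈ Set.Ioo Tlow Thigh, ξ' t ≤ 0 := fun t ht => by
    rw [hODE' t ht]; exact neg_nonpos.2 (Real.sqrt_nonneg _)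
  have hanti : ∀ s ∈ Set.Ioo Tlow Thigh, ∀ t ∈ Set.Ioo Tlow Thigh, s ≤ t → ξ t ≤ ξ s := by
    intro s hs t ht hst
    have hsub : Set.Icc s t ⊆ Set.Ioo Tlow Thigh := fun x hx =>
      ⟨lt_of_lt_of_le hs.1 hx.1, lt_of_le_of_lt hx.2 ht.2⟩
    have := aux_le hst (f := fun r => -ξ r) (f' := fun r => -ξ' r)
      (fun x hx => (hderiv1 x (hsub hx)).neg)
      (fun x hx => neg_nonneg.2 (hξ'np x (hsub ⟨hx.1.le, hx.2.le⟩)))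
    exact le_of_neg_le_neg this
  have hξle : ∀ t ∈ Set.Ioo Tlow Thigh, ξ t ≤ ξ0 := by
    intro t ht
    have hev : ∀ᶠ s in nhdsWithin Tlow (Set.Ioi Tlow), ξ t ≤ ξ s := by
      filter_upwards [Ioo_mem_nhdsGT_of_mem (Set.left_mem_Ico.2 ht.1)] with s hs
      exact hanti s ⟨hs.1, hs.2.trans ht.2⟩ t ht hs.2.le
    exact ge_of_tendsto hlim hev
  have hξlt : ∀ t ∈ Set.Ioo Tlow Thigh, ξ t < ξ0 := by
    intro t ht
    rcases lt_or_eq_of_le (hξle t ht) with h' | heq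
    · exact h'
    exfalso
    have heqs : ∀ s ∈ Set.Ioo Tlow t, ξ s = ξ0 := by
      intro s hs
      have hsI : s ∈ Set.Ioo Tlow Thigh := ⟨hs.1, hs.2.trans ht.2⟩
      have h1 := hξle s hsI
      have h2 := hanti s hsI t ht hs.2.le
      linarith [heq ▸ h2]
    set s0 := (Tlow + t)/2 with hs0def
    have hs0 : s0 ∈ Set.Ioo Tlow t := ⟨by rw [hs0def]; linarith [ht.1], by rw [hs0def]; linarith [ht.1]⟩
    have hs0I : s0 ∈ Set.Ioo Tlow Thigh := ⟨hs0.1, hs0.2.trans ht.2⟩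
    have hev : ξ =ᶠ[nhds s0] (fun _ => ξ0) := by
      filter_upwards [isOpen_Ioo.mem_nhds hs0] with r hr
      exact heqs r hr
    have h0 : HasDerivAt ξ 0 s0 := (hasDerivAt_const s0 ξ0).congr_of_eventuallyEq hev
    have huniq : ξ' s0 = 0 := (hderiv1 s0 hs0I).unique h0
    have : ξ' s0 = -1 := by
      rw [hODE' s0 hs0I, heqs s0 hs0, hhdef]
      simp only
      rw [hg0, Real.zero_rpow hp.ne', mul_zero, add_zero, Real.sqrt_one]
    rw [huniq] at this; norm_num at this
  have hgpos : ∀ t ∈ Set.Ioo Tlow Thigh, 0 < g (ξ t) := by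
    intro t ht
    have h1 : (n:ℝ) * ξ t < (n:ℝ) * ξ0 := mul_lt_mul_of_pos_left (hξlt t ht) hnR
    have h2 : Real.exp ((n:ℝ) * ξ t) < Real.exp ((n:ℝ) * ξ0) := Real.exp_lt_exp.2 h1
    have h3 : c' * Real.exp ((n:ℝ) * ξ0) < c' * Real.exp ((n:ℝ) * ξ t) :=
      mul_lt_mul_of_neg_left h2 hc'
    rw [hgdef]; simp only
    linarith [hexp0]
  set l : Filter ℝ := nhdsWithin Tlow (Set.Ioi Tlow) with hldef
  -- derivative machinery
  set G' : ℝ → ℝ := fun x => c' * (n:ℝ) * Real.exp ((n:ℝ) * x) with hG'def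
  have hgd : ∀ x : ℝ, HasDerivAt g (G' x) x := by
    intro x
    have h1 : HasDerivAt (fun y : ℝ => (n:ℝ) * y) (n:ℝ) x := by
      simpa using (hasDerivAt_id x).const_mul (n:ℝ)
    have h2 := ((h1.exp).const_mul c').const_add 1
    rw [hgdef, hG'def]
    exact h2.congr_deriv (by beta_reduce; ring)
  set H' : ℝ → ℝ := fun x => Real.exp (-2 * x) * (-2) * g x ^ p
      + Real.exp (-2 * x) * (G' x * p * g x ^ (p - 1)) with hH'def
  have hexpd : ∀ x : ℝ, HasDerivAt (fun y => Real.exp (-2 * y)) (Real.exp (-2*x) * (-2)) x := by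
    intro x
    have h1 : HasDerivAt (fun y : ℝ => -2 * y) (-2 : ℝ) x := by
      simpa using (hasDerivAt_id x).const_mul (-2 : ℝ)
    exact h1.exp
  have hhd : ∀ x : ℝ, 0 < g x → HasDerivAt h (H' x) x := by
    intro x hgx
    have h2 : HasDerivAt (fun y => g y ^ p) (G' x * p * g x ^ (p - 1)) x :=
      (hgd x).rpow_const (Or.inl hgx.ne')
    have h3 := ((hexpd x).mul h2).const_add 1
    rw [hhdef, hH'def]
    exact h3
  have hhpos : ∀ x : ℝ, 0 < g x → 0 < h x := by
    intro x hgx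
    rw [hhdef]; simp only
    have h1 := Real.rpow_pos_of_pos hgx p
    have h2 := Real.exp_pos (-2 * x)
    nlinarith
  set F' : ℝ → ℝ := fun x => -(1 / (2 * Real.sqrt (h x)) * H' x) with hF'def
  have hFd : ∀ x : ℝ, 0 < g x → HasDerivAt (fun y => -Real.sqrt (h y)) (F' x) x := by
    intro x hgx
    have hsq := (Real.hasDerivAt_sqrt (hhpos x hgx).ne').comp x (hhd x hgx)
    have h4 := hsq.neg
    rw [hF'def]
    exact h4
  have hξ''eq : ∀ t ∈ Set.Ioo Tlow Thigh, ξ'' t = F' (ξ t) * ξ' t := by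
    intro t ht
    have hcomp := (hFd (ξ t) (hgpos t ht)).comp t (hderiv1 t ht)
    have hev : ξ' =ᶠ[nhds t] (fun s => -Real.sqrt (h (ξ s))) := by
      filter_upwards [isOpen_Ioo.mem_nhds ht] with s hs
      exact hODE' s hs
    have h2 : HasDerivAt ξ' (F' (ξ t) * ξ' t) t :=
      HasDerivAt.congr_of_eventuallyEq hcomp hev
    exact (hderiv2 t ht).unique h2
  -- limits
  have hIoo_mem : Set.Ioo Tlow Thigh ∈ l :=
    Ioo_mem_nhdsGT_of_mem (Set.left_mem_Ico.2 hT)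
  have hcg : Continuous g := by
    rw [hgdef]
    exact continuous_const.add (continuous_const.mul
      (Real.continuous_exp.comp (continuous_const.mul continuous_id)))
  have htu : Tendsto (fun t => g (ξ t)) l (nhds 0) := by
    have := (hcg.tendsto ξ0).comp hlim
    rwa [hg0] at this
  have hE : Tendsto (fun t => Real.exp (-2 * ξ t)) l (nhds (Real.exp (-2 * ξ0))) := by
    have hc2 : Continuous fun x : ℝ => Real.exp (-2 * x) :=
      Real.continuous_exp.comp (continuous_const.mul continuous_id)
    exact (hc2.tendsto ξ0).comp hlim
  have hup : Tendsto (fun t => g (ξ t) ^ p) l (nhds 0) := by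
    have hc3 := (Real.continuousAt_rpow_const 0 p (Or.inr hp.le)).tendsto
    have h5 := hc3.comp htu
    rwa [Real.zero_rpow hp.ne'] at h5
  have hh1 : Tendsto (fun t => h (ξ t)) l (nhds 1) := by
    have h4 : Tendsto (fun t => 1 + Real.exp (-2 * ξ t) * g (ξ t) ^ p) l
        (nhds (1 + Real.exp (-2 * ξ0) * 0)) := tendsto_const_nhds.add (hE.mul hup)
    rw [hhdef]
    simpa using h4
  have hsq1 : Tendsto (fun t => Real.sqrt (h (ξ t))) l (nhds 1) := by
    have h5 := (Real.continuous_sqrt.tendsto 1).comp hh1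
    rwa [Real.sqrt_one] at h5
  have hG'lim : Tendsto (fun t => G' (ξ t)) l (nhds (-(n:ℝ))) := by
    have hc4 : Continuous G' := by
      rw [hG'def]
      exact continuous_const.mul (Real.continuous_exp.comp (continuous_const.mul continuous_id))
    have h5 := (hc4.tendsto ξ0).comp hlim
    have hval : G' ξ0 = -(n:ℝ) := by
      rw [hG'def]; simp only
      rw [mul_comm c' (n:ℝ), mul_assoc, hexp0]; ring
    rwa [hval] at h5
  set E : ℝ := Real.exp (-2 * ξ0) with hEdef
  set A : ℝ := E * (n:ℝ) * p / 2 with hAdef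
  have hApos : 0 < A := by
    rw [hAdef, hEdef]
    positivity
  have hB : Tendsto (fun t => g (ξ t) ^ α * ξ'' t) l (nhds (-A)) := by
    have hT1 : Tendsto (fun t => 1 / (2 * Real.sqrt (h (ξ t)))) l (nhds (1/(2*1))) :=
      tendsto_const_nhds.div (hsq1.const_mul 2) (by norm_num)
    have hT2 : Tendsto (fun t => Real.exp (-2*ξ t) * (-2) * g (ξ t)
        + Real.exp (-2*ξ t) * (G' (ξ t) * p * 1)) l
        (nhds (E * (-2) * 0 + E * (-(n:ℝ) * p * 1))) :=
      ((hE.mul tendsto_const_nhds).mul htu).add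
        (hE.mul ((hG'lim.mul tendsto_const_nhds).mul tendsto_const_nhds))
    have hT3 := ((hT1.mul hT2).neg).mul hlim'
    have hval : -(1/(2*1) * (E*(-2)*0 + E*(-(n:ℝ)*p*1))) * (-1) = -A := by
      rw [hAdef]; ring
    rw [hval] at hT3
    refine Filter.Tendsto.congr' ?_ hT3
    filter_upwards [hIoo_mem] with t ht
    have hu := hgpos t ht
    have e1 : g (ξ t) ^ α * g (ξ t) ^ p = g (ξ t) := by
      rw [← Real.rpow_add hu, hαp, Real.rpow_one]
    have e2 : g (ξ t) ^ α * g (ξ t) ^ (p-1) = 1 := by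
      rw [← Real.rpow_add hu, show α + (p-1) = 0 by linarith, Real.rpow_zero]
    have expand : g (ξ t) ^ α * ξ'' t
        = -(1/(2*Real.sqrt (h (ξ t))) * (Real.exp (-2*ξ t) * (-2) * (g (ξ t)^α * g (ξ t)^p)
            + Real.exp (-2*ξ t) * (G' (ξ t) * p * (g (ξ t)^α * g (ξ t)^(p-1))))) * ξ' t := by
      rw [hξ''eq t ht]
      simp only [hF'def, hH'def]
      ring
    rw [e1, e2] at expand
    rw [expand]
  have hlh : Tendsto (fun t => g (ξ t) / (t - Tlow)) l (nhds (n:ℝ)) := by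
    have hdiv : Tendsto (fun x => (G' (ξ x) * ξ' x) / 1) l (nhds (n:ℝ)) := by
      simp only [div_one]
      have h5 := hG'lim.mul hlim'
      have : (-(n:ℝ)) * (-1) = (n:ℝ) := by ring
      rwa [this] at h5
    exact HasDerivAt.lhopital_zero_right_on_Ioo hT
      (fun x hx => (hgd (ξ x)).comp x (hderiv1 x hx))
      (fun x _ => (hasDerivAt_id x).sub_const Tlow)
      (fun x _ => one_ne_zero)
      htu
      (by
        have h6 : Tendsto (fun t : ℝ => t - Tlow) l (nhds (Tlow - Tlow)) :=
          ((continuous_id.sub continuous_const).tendsto Tlow).mono_left nhdsWithin_le_nhds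
        simpa using h6)
      hdiv
  have hinv : Tendsto (fun t => (t - Tlow) / g (ξ t)) l (nhds ((n:ℝ)⁻¹)) := by
    have h5 := hlh.inv₀ (ne_of_gt hnR)
    exact h5.congr (fun t => inv_div _ _)
  set L : ℝ := ((n:ℝ)⁻¹) ^ α * (-A) with hLdef
  have hL : L < 0 := by
    rw [hLdef]
    have := Real.rpow_pos_of_pos (inv_pos.2 hnR) α
    nlinarith
  have htend : Tendsto (fun t => (t - Tlow) ^ α * ξ'' t) l (nhds L) := by
    have hr : Tendsto (fun t => ((t - Tlow)/g (ξ t)) ^ α) l (nhds (((n:ℝ)⁻¹) ^ α)) :=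
      ((Real.continuousAt_rpow_const _ α (Or.inl (by positivity))).tendsto).comp hinv
    have h6 := hr.mul hB
    rw [← hLdef] at h6
    refine Filter.Tendsto.congr' ?_ h6
    filter_upwards [hIoo_mem] with t ht
    have hu := hgpos t ht
    have hts : 0 < t - Tlow := sub_pos.2 ht.1
    rw [← mul_assoc, ← Real.mul_rpow (by positivity) hu.le, div_mul_cancel₀ _ hu.ne']
  refine ⟨⟨L, hL, htend⟩, ?_⟩
  -- the continuous extension of ξ'
  set d : ℝ → ℝ := fun t => if Tlow < t then ξ' t else -1 with hddef
  have hdIoo : Set.EqOn d ξ' (Set.Ioo Tlow Thigh) := fun t ht => by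
    rw [hddef]; exact if_pos ht.1
  have hdTlow : d Tlow = -1 := by rw [hddef]; exact if_neg (lt_irrefl Tlow)
  have hcd : ContinuousOn d (Set.Ico Tlow Thigh) := by
    intro t ht
    by_cases hlt : Tlow < t
    · have hcA : ContinuousAt d t := by
        have hev : (fun s => ξ' s) =ᶠ[nhds t] d := by
          filter_upwards [isOpen_Ioo.mem_nhds ⟨hlt, ht.2⟩] with s hs
          exact (hdIoo hs).symm
        exact (hderiv2 t ⟨hlt, ht.2⟩).continuousAt.congr hev
      exact hcA.continuousWithinAt
    · have hteq : t = Tlow := le_antisymm (not_lt.1 hlt) ht.1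
      subst hteq
      rw [ContinuousWithinAt, hdTlow]
      rw [show Set.Ico t Thigh = insert t (Set.Ioo t Thigh) from (Set.Ioo_insert_left hT).symm]
      rw [nhdsWithin_insert, tendsto_sup]
      constructor
      · have := tendsto_pure_nhds d t
        rwa [hdTlow] at this
      · rw [nhdsWithin_Ioo_eq_nhdsGT hT]
        refine Filter.Tendsto.congr' ?_ hlim'
        filter_upwards [self_mem_nhdsWithin] with s hs
        rw [hddef]; exact (if_pos hs).symm
  -- uniform bound on the second derivative near Tlow
  have hGbound : ∀ b ∈ Set.Ioo Tlow Thigh, ∃ M : ℝ, 0 ≤ M ∧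
      ∀ x ∈ Set.Ioc Tlow b, |ξ'' x| ≤ M * (x - Tlow) ^ (p - 1) := by
    intro b hb
    have hev : ∀ᶠ x in l, |(x - Tlow) ^ α * ξ'' x| ≤ |L| + 1 :=
      Filter.Tendsto.eventually_le_const (by linarith [abs_nonneg L]) htend.abs
    rcases mem_nhdsGT_iff_exists_Ioc_subset.1 hev with ⟨m, hm, hsubm⟩
    set m' := min m ((Tlow + b)/2) with hm'def
    have hm'1 : Tlow < m' := lt_min hm (by simp only [Set.mem_Ioo] at hb; linarith [hb.1])
    have hm'b : m' ≤ b := le_trans (min_le_right _ _) (by simp only [Set.mem_Ioo] at hb; linarith [hb.1])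
    have hsubIoo : Set.Icc m' b ⊆ Set.Ioo Tlow Thigh := fun x hx =>
      ⟨lt_of_lt_of_le hm'1 hx.1, lt_of_le_of_lt hx.2 hb.2⟩
    have hcG'c : Continuous G' := by
      rw [hG'def]
      exact continuous_const.mul (Real.continuous_exp.comp (continuous_const.mul continuous_id))
    have hcontG : ContinuousOn (fun x => (x - Tlow) ^ α * ξ'' x) (Set.Icc m' b) := by
      intro x hx
      have hxI := hsubIoo hx
      have hcx : ContinuousAt ξ x := (hderiv1 x hxI).continuousAt
      have hcx' : ContinuousAt ξ' x := (hderiv2 x hxI).continuousAt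
      have hgx : 0 < g (ξ x) := hgpos x hxI
      have hcgξ : ContinuousAt (fun y => g (ξ y)) x := hcg.continuousAt.comp hcx
      have hcgp : ContinuousAt (fun y => g (ξ y) ^ p) x :=
        hcgξ.rpow_const (Or.inl hgx.ne')
      have hcgp1 : ContinuousAt (fun y => g (ξ y) ^ (p-1)) x :=
        hcgξ.rpow_const (Or.inl hgx.ne')
      have hcexp : ContinuousAt (fun y => Real.exp (-2 * ξ y)) x :=
        Real.continuous_exp.continuousAt.comp
          ((continuous_const.mul continuous_id).continuousAt.comp hcx)
      have hch : ContinuousAt (fun y => h (ξ y)) x := by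
        have h9 : ContinuousAt (fun y => 1 + Real.exp (-2 * ξ y) * g (ξ y) ^ p) x :=
          continuousAt_const.add (hcexp.mul hcgp)
        exact h9
      have hcsq : ContinuousAt (fun y => Real.sqrt (h (ξ y))) x :=
        ContinuousAt.comp (g := Real.sqrt) (f := fun y => h (ξ y))
          Real.continuous_sqrt.continuousAt hch
      have hsqne : (2 : ℝ) * Real.sqrt (h (ξ x)) ≠ 0 :=
        mul_ne_zero two_ne_zero (ne_of_gt (Real.sqrt_pos.2 (hhpos _ hgx)))
      have hcG'ξ : ContinuousAt (fun y => G' (ξ y)) x := hcG'c.continuousAt.comp hcx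
      have hcH : ContinuousAt (fun y => H' (ξ y)) x := by
        have h9 : ContinuousAt (fun y => Real.exp (-2 * ξ y) * (-2) * g (ξ y) ^ p
            + Real.exp (-2 * ξ y) * (G' (ξ y) * p * g (ξ y) ^ (p-1))) x :=
          ((hcexp.mul continuousAt_const).mul hcgp).add
            (hcexp.mul ((hcG'ξ.mul continuousAt_const).mul hcgp1))
        exact h9
      have hcF : ContinuousAt (fun y => F' (ξ y) * ξ' y) x := by
        have h9 : ContinuousAt (fun y => -(1 / (2 * Real.sqrt (h (ξ y))) * H' (ξ y)) * ξ' y) x :=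
          (((continuousAt_const.div (continuousAt_const.mul hcsq) hsqne).mul hcH).neg).mul hcx'
        exact h9
      have hcxx : ContinuousAt ξ'' x := by
        have hevx : (fun y => F' (ξ y) * ξ' y) =ᶠ[nhds x] ξ'' := by
          filter_upwards [isOpen_Ioo.mem_nhds hxI] with s hs
          exact (hξ''eq s hs).symm
        exact hcF.congr hevx
      have hcpow : ContinuousAt (fun y : ℝ => (y - Tlow) ^ α) x :=
        ((continuous_id.sub continuous_const).continuousAt
          (x := x)).rpow_const (Or.inr hα0)
      exact (hcpow.mul hcxx).continuousWithinAt
    obtain ⟨M2, hM2⟩ := (isCompact_Icc).exists_bound_of_continuousOn hcontG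
    refine ⟨max (|L| + 1) (max M2 0), le_trans (le_max_right M2 0) (le_max_right _ _), ?_⟩
    intro x hx
    set M := max (|L| + 1) (max M2 0) with hMdef
    have hxT : 0 < x - Tlow := sub_pos.2 hx.1
    have hGx : |(x - Tlow) ^ α * ξ'' x| ≤ M := by
      rcases le_or_gt x m' with hle | hgt
      · exact le_trans (hsubm ⟨hx.1, le_trans hle (min_le_left _ _)⟩) (le_max_left _ _)
      · have h9 := hM2 x ⟨hgt.le, hx.2⟩
        rw [Real.norm_eq_abs] at h9
        exact le_trans h9 (le_trans (le_max_left M2 0) (le_max_right _ _))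
    have hone : (x - Tlow) ^ α * (x - Tlow) ^ (p - 1) = 1 := by
      rw [← Real.rpow_add hxT, show α + (p - 1) = 0 by linarith, Real.rpow_zero]
    have hsplit : ξ'' x = ((x - Tlow) ^ α * ξ'' x) * (x - Tlow) ^ (p - 1) := by
      linear_combination (-(ξ'' x)) * hone
    rw [hsplit, abs_mul]
    have hpos2 : 0 < (x - Tlow) ^ (p - 1) := Real.rpow_pos_of_pos hxT _
    rw [abs_of_pos hpos2]
    exact mul_le_mul_of_nonneg_right hGx hpos2.le
  have hkp : (k:ℝ) * p = 1 := by rw [hpdef]; field_simp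
  refine ⟨d, hcd, hdIoo, ?_, ?_⟩
  · -- Hölder
    intro b hb
    obtain ⟨M, hM0, hMb⟩ := hGbound b hb
    set C := M * (k:ℝ) with hCdef
    have hC0 : 0 ≤ C := by rw [hCdef]; positivity
    have hφd : ∀ r : ℝ, Tlow < r →
        HasDerivAt (fun y => C * (y - Tlow) ^ p) (M * (r - Tlow) ^ (p - 1)) r := by
      intro r hr
      have h1 : HasDerivAt (fun y : ℝ => y - Tlow) 1 r := (hasDerivAt_id r).sub_const Tlow
      have h2 := h1.rpow_const (p := p) (Or.inl (ne_of_gt (sub_pos.2 hr)))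
      have h3 := h2.const_mul C
      refine h3.congr_deriv ?_
      rw [hCdef, one_mul,
        show M * (k:ℝ) * (p * (r - Tlow) ^ (p-1)) = M * ((k:ℝ) * p) * (r - Tlow) ^ (p-1) by ring,
        hkp, mul_one]
    have key1 : ∀ s t : ℝ, Tlow < s → s ≤ t → t ≤ b →
        |ξ' t - ξ' s| ≤ C * (t - Tlow) ^ p - C * (s - Tlow) ^ p := by
      intro s t hs hst htb
      have hIcc : Set.Icc s t ⊆ Set.Ioo Tlow Thigh := fun x hx =>
        ⟨lt_of_lt_of_le hs hx.1, lt_of_le_of_lt (le_trans hx.2 htb) hb.2⟩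
      have hbd : ∀ x ∈ Set.Ioo s t, |ξ'' x| ≤ M * (x - Tlow) ^ (p-1) := fun x hx =>
        hMb x ⟨lt_trans hs hx.1, le_trans hx.2.le htb⟩
      have m1 := aux_le hst (f := fun y => C * (y - Tlow)^p - ξ' y)
        (f' := fun x => M * (x - Tlow)^(p-1) - ξ'' x)
        (fun x hx => (hφd x (lt_of_lt_of_le hs hx.1)).sub (hderiv2 x (hIcc hx)))
        (fun x hx => by have h9 := (abs_le.1 (hbd x hx)).2; linarith)
      have m2 := aux_le hst (f := fun y => C * (y - Tlow)^p + ξ' y)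
        (f' := fun x => M * (x - Tlow)^(p-1) + ξ'' x)
        (fun x hx => (hφd x (lt_of_lt_of_le hs hx.1)).add (hderiv2 x (hIcc hx)))
        (fun x hx => by have h9 := (abs_le.1 (hbd x hx)).1; linarith)
      exact abs_sub_le_iff.2 ⟨by linarith, by linarith⟩
    have key2 : ∀ t : ℝ, Tlow < t → t ≤ b → |ξ' t - (-1)| ≤ C * (t - Tlow) ^ p := by
      intro t ht htb
      have hev2 : ∀ᶠ s in l, |ξ' t - ξ' s| ≤ C * (t - Tlow) ^ p := by
        filter_upwards [Ioo_mem_nhdsGT_of_mem (Set.left_mem_Ico.2 ht)] with s hs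
        refine le_trans (key1 s t hs.1 hs.2.le htb) ?_
        have h9 := Real.rpow_nonneg (sub_pos.2 hs.1).le p
        nlinarith
      have htends : Tendsto (fun s => |ξ' t - ξ' s|) l (nhds |ξ' t - (-1)|) :=
        (tendsto_const_nhds.sub hlim').abs
      exact le_of_tendsto htends hev2
    refine ⟨C, ?_⟩
    have key : ∀ s t : ℝ, Tlow ≤ s → s ≤ t → t ≤ b → |d s - d t| ≤ C * |s - t| ^ p := by
      intro s t hTs hst htb
      rcases eq_or_lt_of_le hst with rfl | hst'
      · simp [Real.zero_rpow hp.ne']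
      have habs' : |s - t| = t - s := by rw [abs_sub_comm, abs_of_pos (sub_pos.2 hst')]
      rcases eq_or_lt_of_le hTs with hTs' | hTs'
      · subst hTs'
        rw [hdTlow, hdIoo ⟨hst', lt_of_le_of_lt htb hb.2⟩, habs', abs_sub_comm]
        exact key2 t hst' htb
      · rw [hdIoo ⟨hTs', lt_of_le_of_lt (hst.trans htb) hb.2⟩,
          hdIoo ⟨lt_of_lt_of_le hTs' hst, lt_of_le_of_lt htb hb.2⟩, habs', abs_sub_comm]
        refine le_trans (key1 s t hTs' hst htb) ?_
        have hsub2 : (t - Tlow) ^ p ≤ (t - s) ^ p + (s - Tlow) ^ p := by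
          have h9 := aux_subadd (x := t - s) (y := s - Tlow)
            (by linarith) (by linarith) hp.le hp1
          rwa [show t - s + (s - Tlow) = t - Tlow by ring] at h9
        nlinarith [mul_le_mul_of_nonneg_left hsub2 hC0]
    intro s hs t ht
    rcases le_total s t with hst | hst
    · exact key s t hs.1 hst ht.2
    · rw [abs_sub_comm, abs_sub_comm s t]
      exact key t s ht.1 hst hs.2
  · -- not γ-Hölder
    intro γ hγ b hb C
    have hev3 : ∀ᶠ x in l, (x - Tlow) ^ α * ξ'' x ≤ L / 2 :=
      Filter.Tendsto.eventually_le_const (by linarith) htend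
    rcases mem_nhdsGT_iff_exists_Ioc_subset.1 hev3 with ⟨m, hm, hsubm⟩
    set b' := min m b with hb'def
    have hb'1 : Tlow < b' := lt_min hm hb.1
    have hb'b : b' ≤ b := min_le_right _ _
    have hψd : ∀ r : ℝ, Tlow < r →
        HasDerivAt (fun y => (L/2) * (k:ℝ) * (y - Tlow) ^ p) ((L/2) * (r - Tlow) ^ (p - 1)) r := by
      intro r hr
      have h1 : HasDerivAt (fun y : ℝ => y - Tlow) 1 r := (hasDerivAt_id r).sub_const Tlow
      have h2 := h1.rpow_const (p := p) (Or.inl (ne_of_gt (sub_pos.2 hr)))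
      have h3 := h2.const_mul ((L/2) * (k:ℝ))
      refine h3.congr_deriv ?_
      rw [one_mul,
        show (L/2) * (k:ℝ) * (p * (r - Tlow) ^ (p-1)) = (L/2) * ((k:ℝ) * p) * (r - Tlow) ^ (p-1) by ring,
        hkp, mul_one]
    have key3 : ∀ t : ℝ, Tlow < t → t ≤ b' → ξ' t + 1 ≤ (L/2) * (k:ℝ) * (t - Tlow) ^ p := by
      intro t ht htb
      have hstep : ∀ᶠ s in l, ξ' t - ξ' s ≤
          (L/2)*(k:ℝ)*(t - Tlow)^p - (L/2)*(k:ℝ)*(s - Tlow)^p := by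
        filter_upwards [Ioo_mem_nhdsGT_of_mem (Set.left_mem_Ico.2 ht)] with s hs
        have hIcc : Set.Icc s t ⊆ Set.Ioo Tlow Thigh := fun x hx =>
          ⟨lt_of_lt_of_le hs.1 hx.1,
            lt_of_le_of_lt (le_trans hx.2 (le_trans htb hb'b)) hb.2⟩
        have m3 := aux_le hs.2.le (f := fun y => (L/2)*(k:ℝ)*(y - Tlow)^p - ξ' y)
          (f' := fun x => (L/2)*(x - Tlow)^(p-1) - ξ'' x)
          (fun x hx => (hψd x (lt_of_lt_of_le hs.1 hx.1)).sub (hderiv2 x (hIcc hx)))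
          (fun x hx => by
            have hxT : 0 < x - Tlow := sub_pos.2 (lt_trans hs.1 hx.1)
            have hxm : x ∈ Set.Ioc Tlow m :=
              ⟨lt_trans hs.1 hx.1, le_trans hx.2.le (le_trans htb (min_le_left _ _))⟩
            have hGle := hsubm hxm
            have hone : (x - Tlow) ^ α * (x - Tlow) ^ (p - 1) = 1 := by
              rw [← Real.rpow_add hxT, show α + (p - 1) = 0 by linarith, Real.rpow_zero]
            have hsplit : ξ'' x = ((x - Tlow) ^ α * ξ'' x) * (x - Tlow) ^ (p - 1) := by
              linear_combination (-(ξ'' x)) * hone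
            have hpos2 : 0 < (x - Tlow) ^ (p - 1) := Real.rpow_pos_of_pos hxT _
            have h9 : ξ'' x ≤ (L/2) * (x - Tlow) ^ (p-1) := by
              rw [hsplit]
              exact mul_le_mul_of_nonneg_right hGle hpos2.le
            linarith)
        linarith
      have hlhs : Tendsto (fun s => ξ' t - ξ' s) l (nhds (ξ' t - (-1))) :=
        tendsto_const_nhds.sub hlim'
      have hs0 : Tendsto (fun s : ℝ => (s - Tlow) ^ p) l (nhds 0) := by
        have h6 : Tendsto (fun s : ℝ => s - Tlow) l (nhds (Tlow - Tlow)) :=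
          ((continuous_id.sub continuous_const).tendsto Tlow).mono_left nhdsWithin_le_nhds
        rw [sub_self] at h6
        have h7 := (Real.continuousAt_rpow_const 0 p (Or.inr hp.le)).tendsto.comp h6
        rwa [Real.zero_rpow hp.ne'] at h7
      have hrhs : Tendsto (fun s => (L/2)*(k:ℝ)*(t - Tlow)^p - (L/2)*(k:ℝ)*(s - Tlow)^p) l
          (nhds ((L/2)*(k:ℝ)*(t - Tlow)^p - (L/2)*(k:ℝ)*0)) :=
        tendsto_const_nhds.sub (hs0.const_mul _)
      have h8 := le_of_tendsto_of_tendsto hlhs hrhs hstep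
      rw [mul_zero, sub_zero] at h8
      linarith
    have he1 : Set.Ioc Tlow b' ∈ l := Ioc_mem_nhdsGT hb'1
    have he2 : Tendsto (fun t : ℝ => C * (t - Tlow) ^ (γ - p)) l (nhds (C * 0)) := by
      have h6 : Tendsto (fun s : ℝ => s - Tlow) l (nhds (Tlow - Tlow)) :=
        ((continuous_id.sub continuous_const).tendsto Tlow).mono_left nhdsWithin_le_nhds
      rw [sub_self] at h6
      have h7 := (Real.continuousAt_rpow_const 0 (γ - p) (Or.inr (by linarith))).tendsto.comp h6
      rw [Real.zero_rpow (by linarith : γ - p ≠ 0)] at h7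
      exact h7.const_mul C
    have he3 : ∀ᶠ t in l, C * (t - Tlow) ^ (γ - p) < -(L/2)*(k:ℝ) := by
      refine Filter.Tendsto.eventually_lt_const ?_ he2
      rw [mul_zero]
      nlinarith
    have he1' : ∀ᶠ t in l, t ∈ Set.Ioc Tlow b' := he1
    have he4 : ∀ᶠ t in l, t ∈ Set.Ioc Tlow b' ∧ C * (t - Tlow) ^ (γ - p) < -(L/2)*(k:ℝ) :=
      he1'.and he3
    obtain ⟨t, htI, htC⟩ := he4.exists
    refine ⟨Tlow, ⟨le_refl Tlow, hb.1.le⟩, t, ⟨htI.1.le, le_trans htI.2 hb'b⟩, ?_⟩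
    have htT : 0 < t - Tlow := sub_pos.2 htI.1
    have habs2 : |Tlow - t| = t - Tlow := by rw [abs_sub_comm, abs_of_pos htT]
    have hk3 := key3 t htI.1 htI.2
    have hdt : d t = ξ' t := hdIoo ⟨htI.1, lt_of_le_of_lt (le_trans htI.2 hb'b) hb.2⟩
    have hppos : 0 < (t - Tlow) ^ p := Real.rpow_pos_of_pos htT _
    have hlow : (-(L/2)*(k:ℝ))*(t - Tlow)^p ≤ |d Tlow - d t| := by
      rw [hdTlow, hdt]
      have h8 : -(ξ' t + 1) ≤ |(-1 : ℝ) - ξ' t| := by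
        rw [show (-1 : ℝ) - ξ' t = -(ξ' t + 1) by ring]
        exact le_abs_self _
      have h9 : -((L/2)*(k:ℝ)*(t - Tlow)^p) ≤ -(ξ' t + 1) := by linarith
      linarith
    rw [habs2]
    have hsplitγ : (t - Tlow) ^ γ = (t - Tlow) ^ (γ - p) * (t - Tlow) ^ p := by
      rw [← Real.rpow_add htT]
      congr 1
      ring
    calc C * (t - Tlow) ^ γ = (C * (t - Tlow)^(γ-p)) * (t - Tlow)^p := by
          rw [hsplitγ]; ring
      _ < (-(L/2)*(k:ℝ)) * (t - Tlow)^p := mul_lt_mul_of_pos_right htC hppos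
      _ ≤ |d Tlow - d t| := hlow
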